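/- Let m ≥ 27 and δ_b > 0, and set ζ = max(4, 1 + 3·log(2e/δ_b)/(2·log m)). Consider a random bipartite graph with parts A and B each of size m, where each of the m² possible edges is present independently with probability p = ζ·log(m)/m. Then with probability at least 1 − δ_b the graph contains a perfect matching between A and B. -/

import Mathlib

set_option maxHeartbeats 1000000

open MeasureTheory
open scoped ENNReal

section Aux
open Real

private lemma pow_self_le_exp_mul_factorial (k : ℕ) (hk : 1 ≤ k) :
    (k:ℝ)^k ≤ Real.exp 1 ^ k * (k.factorial:ℝ) := by
  induction k, hk using Nat.le_induction with
  | base => simpa using Real.one_le_exp (by norm_num)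
  | succ n hn ih =>
    have hnr : (0:ℝ) < n := by exact_mod_cast hn
    have h2 : ((n:ℝ)+1)^n ≤ Real.exp 1 * (n:ℝ)^n := by
      have hb : ((n:ℝ)+1) ≤ n * Real.exp (1/(n:ℝ)) := by
        have h := Real.add_one_le_exp (1/(n:ℝ))
        calc ((n:ℝ)+1) = n * (1/(n:ℝ) + 1) := by field_simp; ring
        _ ≤ n * Real.exp (1/(n:ℝ)) := by nlinarith [h]
      calc ((n:ℝ)+1)^n ≤ ((n:ℝ) * Real.exp (1/(n:ℝ)))^n := by
            apply pow_le_pow_left₀ (by positivity) hb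
      _ = (n:ℝ)^n * Real.exp (1/(n:ℝ)) ^ n := mul_pow _ _ _
      _ = (n:ℝ)^n * Real.exp ((n:ℝ) * (1/(n:ℝ))) := by rw [← Real.exp_nat_mul]
      _ = (n:ℝ)^n * Real.exp 1 := by rw [mul_one_div_cancel (ne_of_gt hnr)]
      _ = Real.exp 1 * (n:ℝ)^n := mul_comm _ _
    have hfact : ((n+1).factorial : ℝ) = ((n:ℝ)+1) * n.factorial := by
      push_cast [Nat.factorial_succ]; ring
    have he : (0:ℝ) < Real.exp 1 := Real.exp_pos 1
    have hpos : (0:ℝ) < Real.exp 1 ^ n := by positivity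
    have hfp : (0:ℝ) < n.factorial := by exact_mod_cast n.factorial_pos
    calc (((n+1:ℕ)):ℝ)^(n+1) = ((n:ℝ)+1) * ((n:ℝ)+1)^n := by push_cast; ring
    _ ≤ ((n:ℝ)+1) * (Real.exp 1 * (n:ℝ)^n) := by gcongr
    _ ≤ ((n:ℝ)+1) * (Real.exp 1 * (Real.exp 1 ^ n * n.factorial)) := by gcongr
    _ = Real.exp 1 ^ (n+1) * ((n+1).factorial) := by rw [hfact]; ring

private lemma choose_le_exp (m k : ℕ) (hm : 1 ≤ m) (hk : 1 ≤ k) :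
    (m.choose k : ℝ) ≤ Real.exp ((k:ℝ) * (1 + Real.log m - Real.log k)) := by
  have hmr : (0:ℝ) < m := by exact_mod_cast hm
  have hkr : (0:ℝ) < k := by exact_mod_cast hk
  have h1 : (m.choose k : ℝ) ≤ (m:ℝ)^k / k.factorial := by
    exact_mod_cast Nat.choose_le_pow_div k m
  have hfpos : (0:ℝ) < k.factorial := by exact_mod_cast k.factorial_pos
  have h2 : (m:ℝ)^k / k.factorial ≤ (m:ℝ)^k * Real.exp 1 ^ k / (k:ℝ)^k := by
    rw [div_le_div_iff₀ hfpos (by positivity)]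
    nlinarith [pow_self_le_exp_mul_factorial k hk, pow_pos hmr k]
  have h3 : (m:ℝ)^k * Real.exp 1 ^ k / (k:ℝ)^k = Real.exp ((k:ℝ) * (1 + Real.log m - Real.log k)) := by
    rw [← Real.exp_log (pow_pos hmr k), Real.log_pow, ← Real.exp_log (pow_pos hkr k),
      Real.log_pow, Real.exp_one_pow, ← Real.exp_add, ← Real.exp_sub]
    ring_nf
  calc (m.choose k : ℝ) ≤ (m:ℝ)^k / k.factorial := h1
  _ ≤ (m:ℝ)^k * Real.exp 1 ^ k / (k:ℝ)^k := h2
  _ = _ := h3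


private lemma log3_ge_one : (1:ℝ) ≤ Real.log 3 := by
  rw [← Real.log_exp 1]
  apply Real.log_le_log (Real.exp_pos 1)
  nlinarith [Real.exp_one_lt_d9]

private lemma logm_ge (m : ℕ) (hm : 27 ≤ m) : 3 ≤ Real.log m := by
  have h27 : Real.log 27 = 3 * Real.log 3 := by
    rw [show (27:ℝ) = 3^3 by norm_num, Real.log_pow]; push_cast; ring
  have hmono : Real.log 27 ≤ Real.log m := by
    apply Real.log_le_log (by norm_num)
    exact_mod_cast hm
  nlinarith [log3_ge_one]



private lemma core_scalar (m k : ℕ) (ζ : ℝ) (hm : 27 ≤ m) (hζ : 4 ≤ ζ)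
    (hk1 : 1 ≤ k) (hk2 : 2*k ≤ m+1) :
    (m.choose k : ℝ) * (m.choose (k-1) : ℝ) *
      Real.exp (-(ζ * Real.log m / m * ((k:ℝ)*((m:ℝ)-(k:ℝ)+1)))) ≤
    Real.exp (1 + (-1 - 2*(ζ-1)/3) * Real.log m) := by
  set L : ℝ := Real.log m with hL
  have hL3 : 3 ≤ L := logm_ge m hm
  have hmr : (27:ℝ) ≤ m := by exact_mod_cast hm
  have hm0 : (0:ℝ) < m := by linarith
  have hkr : (1:ℝ) ≤ k := by exact_mod_cast hk1
  have hk2r : 2*(k:ℝ) ≤ (m:ℝ)+1 := by exact_mod_cast hk2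
  have hkm : (k:ℝ) ≤ m := by linarith
  rcases Nat.lt_or_ge k 3 with hk3 | hk3
  · interval_cases k
    · -- k = 1
      have hme : (m:ℝ) = Real.exp L := by rw [hL, Real.exp_log hm0]
      have hζL4 : 4*L ≤ ζ*L := by nlinarith
      have he2 : ζ * L / (m:ℝ) * (((1:ℕ):ℝ)*((m:ℝ)-((1:ℕ):ℝ)+1)) = ζ*L := by
        push_cast; field_simp; ring
      rw [he2]
      have hch : ((m.choose 1 : ℕ):ℝ) * ((m.choose (1-1) : ℕ):ℝ) = (m:ℝ) := by
        norm_num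
      rw [hch, show (m:ℝ) * Real.exp (-(ζ*L)) = Real.exp (L + -(ζ*L)) by
        rw [Real.exp_add, ← hme]]
      apply Real.exp_le_exp.mpr
      linarith
    · -- k = 2
      have hc2 : (m.choose 2 : ℝ) ≤ (m:ℝ)^2 := by exact_mod_cast Nat.choose_le_pow m 2
      have hc1 : ((m.choose (2-1) : ℕ) : ℝ) = m := by norm_num
      have hme : (m:ℝ) = Real.exp L := by rw [hL, Real.exp_log hm0]
      have hζL4 : 4*L ≤ ζ*L := by nlinarith
      have h3L : (m:ℝ)^2 * m = Real.exp (3*L) := by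
        rw [show Real.exp (3*L) = Real.exp L ^ 3 by rw [← Real.exp_nat_mul]; norm_num,
          ← hme]; ring
      have hb : (m.choose 2 : ℝ) * (m.choose (2-1) : ℝ) *
          Real.exp (-(ζ * L / (m:ℝ) * (((2:ℕ):ℝ)*((m:ℝ)-((2:ℕ):ℝ)+1)))) ≤
          Real.exp (3*L + -(ζ * L / (m:ℝ) * (((2:ℕ):ℝ)*((m:ℝ)-((2:ℕ):ℝ)+1)))) := by
        rw [Real.exp_add, ← h3L, hc1]
        gcongr
      refine hb.trans (Real.exp_le_exp.mpr ?_)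
      have hfrac : ζ * L / (m:ℝ) * (((2:ℕ):ℝ)*((m:ℝ)-((2:ℕ):ℝ)+1)) = 2*ζ*L - 2*ζ*L/m := by
        push_cast; field_simp; ring
      have hLpos : (0:ℝ) < L := by linarith
      have hζL : (0:ℝ) ≤ 2*ζ*L := by nlinarith
      have h1m : 2*ζ*L/m ≤ 2*ζ*L/27 :=
        div_le_div_of_nonneg_left hζL (by norm_num) hmr
      linarith [hfrac, h1m, hζL4, hL3]
  · -- k ≥ 3
    have hk3r : (3:ℝ) ≤ k := by exact_mod_cast hk3
    have hk0 : (0:ℝ) < k := by linarith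
    have hck : (m.choose k : ℝ) ≤ Real.exp ((k:ℝ) * (1 + L - Real.log k)) :=
      choose_le_exp m k (by omega) hk1
    have hck1 : (m.choose (k-1) : ℝ) ≤ Real.exp (((k:ℝ)-1) * (1 + L - Real.log ((k:ℝ)-1))) := by
      have h := choose_le_exp m (k-1) (by omega) (by omega)
      have hcast : ((k-1:ℕ):ℝ) = (k:ℝ)-1 := by
        push_cast [Nat.cast_sub hk1]; ring
      rwa [hcast] at h
    set lk : ℝ := Real.log k with hlkdef
    set lk' : ℝ := Real.log ((k:ℝ)-1) with hlk'def
    have hlkL : lk ≤ L := Real.log_le_log hk0 hkm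
    have hk1pos : (0:ℝ) < (k:ℝ)-1 := by linarith
    -- S1 : (k-1)(1+L-lk') ≤ k(1+L-lk)
    have hdiff : ((k:ℝ)-1)*(lk - lk') ≤ 1 := by
      have hlog : Real.log ((k:ℝ)/((k:ℝ)-1)) ≤ (k:ℝ)/((k:ℝ)-1) - 1 :=
        Real.log_le_sub_one_of_pos (by positivity)
      have hld : Real.log ((k:ℝ)/((k:ℝ)-1)) = lk - lk' :=
        Real.log_div (ne_of_gt hk0) (ne_of_gt hk1pos)
      have hre : (k:ℝ)/((k:ℝ)-1) - 1 = 1/((k:ℝ)-1) := by field_simp; ring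
      rw [hld, hre] at hlog
      calc ((k:ℝ)-1)*(lk - lk') ≤ ((k:ℝ)-1)*(1/((k:ℝ)-1)) := by
            apply mul_le_mul_of_nonneg_left hlog (by linarith)
        _ = 1 := by field_simp
    have hS1 : ((k:ℝ)-1) * (1 + L - lk') ≤ (k:ℝ) * (1 + L - lk) := by nlinarith
    -- main exponent inequality
    set q : ℝ := (k:ℝ)*((m:ℝ)-(k:ℝ)+1)/(m:ℝ) with hq
    have hteq : ζ * L / m * ((k:ℝ)*((m:ℝ)-(k:ℝ)+1)) = ζ*(L*q) := by
      rw [hq]; ring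
    have hmk1 : ((m:ℝ)+1)/2 ≤ (m:ℝ)-(k:ℝ)+1 := by linarith
    have hq23 : 2/3 ≤ q := by
      rw [hq, le_div_iff₀ hm0]
      nlinarith
    have hLpos : (0:ℝ) < L := by linarith
    have hLq : (0:ℝ) ≤ L*q - 2*L/3 := by
      have h := mul_le_mul_of_nonneg_left hq23 hLpos.le
      linarith
    have ht : ζ*(L*q) - 2*ζ*L/3 ≥ 4*(L*q) - 8*L/3 := by nlinarith [mul_nonneg (by linarith : (0:ℝ) ≤ ζ-4) hLq]
    -- case bound CB
    have hCB : 4*(L*q) - 2*((k:ℝ)*L) - 3*L + 2*((k:ℝ)*lk) - 2*(k:ℝ) + 1 ≥ 0 := by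
      rcases le_or_gt (4*(k:ℝ)^2) ((2*(k:ℝ)-3)*m) with hc | hc
      · -- g ≥ 0 case
        have hg : 4*q - 2*(k:ℝ) - 3 ≥ 0 := by
          rw [hq, ge_iff_le, ← sub_nonneg]
          have : 4*((k:ℝ)*((m:ℝ)-(k:ℝ)+1)/(m:ℝ)) - 2*(k:ℝ) - 3 - 0
              = (4*((k:ℝ)*((m:ℝ)-(k:ℝ)+1)) - (2*(k:ℝ)+3)*m)/m := by field_simp; ring
          rw [this]
          apply div_nonneg _ (le_of_lt hm0)
          nlinarith
        have hlk1 : 1 ≤ lk := by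
          have : Real.log 3 ≤ lk := Real.log_le_log (by norm_num) hk3r
          linarith [log3_ge_one]
        nlinarith
      · -- near-middle case
        have h2k : (m:ℝ) - 6 ≤ 2*(k:ℝ) := by
          by_contra hcon
          push_neg at hcon
          nlinarith [mul_nonneg (by linarith : (0:ℝ) ≤ 2*(k:ℝ)-6) (by linarith : (0:ℝ) ≤ (m:ℝ)-2*(k:ℝ)-6)]
        have hg : 4*q - 2*(k:ℝ) - 3 ≥ -5 := by
          rw [hq, ge_iff_le, ← sub_nonneg]
          have : 4*((k:ℝ)*((m:ℝ)-(k:ℝ)+1)/(m:ℝ)) - 2*(k:ℝ) - 3 - -5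
              = (4*((k:ℝ)*((m:ℝ)-(k:ℝ)+1)) - (2*(k:ℝ)-2)*m)/m := by field_simp; ring
          rw [this]
          apply div_nonneg _ (le_of_lt hm0)
          nlinarith [mul_le_mul_of_nonneg_right hk2r (by linarith : (0:ℝ) ≤ 2*(k:ℝ))]
        have hlk2 : L - 1 ≤ lk := by
          rw [hlkdef, ← Real.log_exp (L-1)]
          apply Real.log_le_log (Real.exp_pos _)
          rw [Real.exp_sub, hL, Real.exp_log hm0]
          rw [div_le_iff₀ (Real.exp_pos 1)]
          nlinarith [Real.exp_one_gt_d9]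
        have hprod : ((m:ℝ)-6)*(L-2) ≤ 2*(k:ℝ)*(lk-1) := by
          apply mul_le_mul h2k (by linarith) (by linarith) (by linarith)
        nlinarith [mul_nonneg (by linarith : (0:ℝ) ≤ L-3) (by linarith : (0:ℝ) ≤ (m:ℝ)-11)]
    calc (m.choose k : ℝ) * (m.choose (k-1) : ℝ) *
        Real.exp (-(ζ * L / m * ((k:ℝ)*((m:ℝ)-(k:ℝ)+1))))
        ≤ Real.exp ((k:ℝ) * (1 + L - lk)) * Real.exp (((k:ℝ)-1) * (1 + L - lk')) *
          Real.exp (-(ζ * L / m * ((k:ℝ)*((m:ℝ)-(k:ℝ)+1)))) := by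
          exact mul_le_mul (mul_le_mul hck hck1 (Nat.cast_nonneg _) (Real.exp_pos _).le)
            le_rfl (Real.exp_pos _).le (by positivity)
      _ = Real.exp ((k:ℝ) * (1 + L - lk) + ((k:ℝ)-1) * (1 + L - lk') + -(ζ*(L*q))) := by
          rw [← hteq, ← Real.exp_add, ← Real.exp_add]
      _ ≤ Real.exp (1 + (-1 - 2*(ζ-1)/3) * L) := by
          apply Real.exp_le_exp.mpr
          nlinarith [hS1, ht, hCB]

end Aux


private lemma cyl_measure (n : ℕ) (p : ℝ) (hp0 : 0 ≤ p) (h : Real.toNNReal p ≤ 1)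
    (F : Finset (Fin n × Fin n)) :
    (Measure.pi fun _ : Fin n × Fin n => (PMF.bernoulli (Real.toNNReal p) h).toMeasure)
      {ω | ∀ x ∈ F, ω x = false} = ENNReal.ofReal (1-p) ^ F.card := by
  classical
  have hset : {ω : Fin n × Fin n → Bool | ∀ x ∈ F, ω x = false}
      = Set.pi Set.univ (fun x => if x ∈ F then ({false} : Set Bool) else Set.univ) := by
    ext ω
    simp only [Set.mem_setOf_eq, Set.mem_pi, Set.mem_univ, forall_true_left]
    constructor
    · intro hh x
      by_cases hx : x ∈ F
      · simp [hx, hh x hx]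
      · simp only [hx, if_false, Set.mem_univ]
    · intro hh x hx
      have := hh x
      simpa [hx] using this
  have hb : (PMF.bernoulli (Real.toNNReal p) h).toMeasure {false} = ENNReal.ofReal (1-p) := by
    rw [PMF.toMeasure_apply_singleton _ _ (measurableSet_singleton false),
      PMF.bernoulli_apply]
    simp only [Bool.cond_false]
    rw [ENNReal.coe_sub, ENNReal.coe_one, ENNReal.ofReal_sub 1 hp0, ENNReal.ofReal_one]
    rfl
  rw [hset, Measure.pi_pi]
  calc (∏ x : Fin n × Fin n,
        (PMF.bernoulli (Real.toNNReal p) h).toMeasure (if x ∈ F then {false} else Set.univ))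
      = ∏ x : Fin n × Fin n, (if x ∈ F then ENNReal.ofReal (1-p) else 1) := by
        apply Finset.prod_congr rfl
        intro x _
        by_cases hx : x ∈ F
        · simp [hx, hb]
        · simp only [hx, if_false]
          exact measure_univ
    _ = ∏ x ∈ Finset.univ ∩ F, ENNReal.ofReal (1-p) := Finset.prod_ite_mem _ _ _
    _ = ENNReal.ofReal (1-p) ^ F.card := by rw [Finset.univ_inter, Finset.prod_const]

private lemma hall_cover (n : ℕ) (ω : Fin n × Fin n → Bool)
    (hω : ¬ ∃ e : Equiv.Perm (Fin n), ∀ i, ω (i, e i) = true) :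
    ∃ k ∈ Finset.Icc 1 ((n+1)/2), ∃ S T : Finset (Fin n), S.card = k ∧ T.card = k - 1 ∧
      ((∀ i ∈ S, ∀ j, j ∉ T → ω (i, j) = false) ∨ (∀ i ∈ S, ∀ j, j ∉ T → ω (j, i) = false)) := by
  classical
  set t : Fin n → Finset (Fin n) := fun i => Finset.univ.filter (fun j => ω (i,j) = true) with ht
  have hhall : ¬ ∀ s : Finset (Fin n), s.card ≤ (s.biUnion t).card := by
    intro hh
    obtain ⟨f, hfinj, hf⟩ := (Finset.all_card_le_biUnion_card_iff_exists_injective t).mp hh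
    refine hω ⟨Equiv.ofBijective f (Finite.injective_iff_bijective.mp hfinj), fun i => ?_⟩
    have := hf i
    simp only [ht, Finset.mem_filter] at this
    exact this.2
  push_neg at hhall
  obtain ⟨S, hS⟩ := hhall
  set N := S.biUnion t with hN
  set k₀ := S.card with hk₀
  have hk₀1 : 1 ≤ k₀ := by omega
  have hk₀m : k₀ ≤ n := by
    have := Finset.card_le_univ S
    simpa using this
  have hNk : N.card ≤ k₀ - 1 := by omega
  have hmem : ∀ i ∈ S, ∀ j, ω (i,j) = true → j ∈ N := by
    intro i hi j hj
    exact Finset.mem_biUnion.mpr ⟨i, hi, by simp [ht, hj]⟩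
  by_cases h2 : 2*k₀ ≤ n+1
  · obtain ⟨T, hNT, hTcard⟩ := Finset.exists_superset_card_eq hNk
      (by simpa using by omega : k₀ - 1 ≤ Fintype.card (Fin n))
    refine ⟨k₀, Finset.mem_Icc.mpr ⟨hk₀1, by omega⟩, S, T, rfl, hTcard, Or.inl ?_⟩
    intro i hi j hj
    by_contra hcon
    exact hj (hNT (hmem i hi j (by simpa using hcon)))
  · -- B-side
    set k₁ := n - k₀ + 1 with hk₁
    have hcompl : k₁ ≤ Nᶜ.card := by
      have : Nᶜ.card = n - N.card := by
        rw [Finset.card_compl]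
        simp
      omega
    obtain ⟨S', hS'sub, hS'card⟩ := Finset.exists_subset_card_eq hcompl
    refine ⟨k₁, Finset.mem_Icc.mpr ⟨by omega, by omega⟩, S', Finset.univ \ S, hS'card, ?_, Or.inr ?_⟩
    · rw [Finset.card_sdiff_of_subset (Finset.subset_univ S)]
      simp only [Finset.card_univ, Fintype.card_fin]
      omega
    · intro i hi j hj
      have hjS : j ∈ S := by
        by_contra hjj
        exact hj (Finset.mem_sdiff.mpr ⟨Finset.mem_univ j, hjj⟩)
      by_contra hcon
      have hiN : i ∈ N := hmem j hjS i (by simpa using hcon)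
      have : i ∈ Nᶜ := hS'sub hi
      simp only [Finset.mem_compl] at this
      exact this hiN

/-- Random bipartite matching with confidence parameter: for `m ≥ 27`, `δ_b > 0` and
`ζ = max(4, 1 + 3 log(2e/δ_b)/(2 log m))`, a random bipartite graph with parts of size `m`
and edge probability `p = ζ log(m)/m` contains a perfect matching with probability at
least `1 − δ_b`. -/
theorem stmt_14 (m : ℕ) (hm : 27 ≤ m) (δb : ℝ) (hδb : 0 < δb)
    (ζ : ℝ) (hζ : ζ = max 4 (1 + 3 * Real.log (2 * Real.exp 1 / δb) / (2 * Real.log m)))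
    (p : ℝ) (hp : p = ζ * Real.log m / m) (hp1 : p ≤ 1) :
    ENNReal.ofReal (1 - δb) ≤
      (Measure.pi fun _ : Fin m × Fin m =>
          (PMF.bernoulli (Real.toNNReal p) (Real.toNNReal_le_one.mpr hp1)).toMeasure)
        {ω | ∃ π : Equiv.Perm (Fin m), ∀ i, ω (i, π i) = true} := by
  classical
  rcases le_or_gt δb 1 with hδb1 | hδb1
  swap
  · calc ENNReal.ofReal (1 - δb) = 0 := by
          rw [ENNReal.ofReal_eq_zero]; linarith
      _ ≤ _ := zero_le
  set L : ℝ := Real.log m with hL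
  have hL3 : 3 ≤ L := logm_ge m hm
  have hm0 : (0:ℝ) < m := by positivity
  have hζ4 : (4:ℝ) ≤ ζ := by rw [hζ]; exact le_max_left _ _
  set A : ℝ := Real.log (2 * Real.exp 1 / δb) with hA
  have hζb : 1 + 3 * A / (2 * L) ≤ ζ := by rw [hζ]; exact le_max_right _ _
  have hp0 : 0 ≤ p := by
    rw [hp]; apply div_nonneg (mul_nonneg (by linarith) (by linarith)) (le_of_lt hm0)
  have h1p : 0 ≤ 1 - p := by linarith
  set μ := (Measure.pi fun _ : Fin m × Fin m =>
      (PMF.bernoulli (Real.toNNReal p) (Real.toNNReal_le_one.mpr hp1)).toMeasure) with hμ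
  set E := {ω : Fin m × Fin m → Bool | ∃ π : Equiv.Perm (Fin m), ∀ i, ω (i, π i) = true}
    with hE
  have hEmeas : MeasurableSet E := (Set.to_countable _).measurableSet
  have hprob : IsProbabilityMeasure μ := by infer_instance
  set K := (m+1)/2 with hK
  set q := ENNReal.ofReal (1-p) with hq
  set R := ENNReal.ofReal (Real.exp (1 + (-1 - 2*(ζ-1)/3) * L)) with hR
  -- the two bad event families
  set A₀ : Finset (Fin m) → Finset (Fin m) → Set (Fin m × Fin m → Bool) :=
    fun S T => {ω | ∀ i ∈ S, ∀ j, j ∉ T → ω (i, j) = false} with hA₀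
  set A₁ : Finset (Fin m) → Finset (Fin m) → Set (Fin m × Fin m → Bool) :=
    fun S T => {ω | ∀ i ∈ S, ∀ j, j ∉ T → ω (j, i) = false} with hA₁
  have hmeas0 : ∀ S T, μ (A₀ S T) = q ^ (S.card * (m - T.card)) := by
    intro S T
    have hset : A₀ S T = {ω : Fin m × Fin m → Bool | ∀ x ∈ S ×ˢ Tᶜ, ω x = false} := by
      ext ω
      simp only [hA₀, Set.mem_setOf_eq, Finset.mem_product, Finset.mem_compl]
      constructor
      · rintro h x ⟨hx1, hx2⟩; exact h x.1 hx1 x.2 hx2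
      · intro h i hi j hj; exact h (i,j) ⟨hi, hj⟩
    rw [hset, hμ, cyl_measure m p hp0 _ _, Finset.card_product, Finset.card_compl,
      Fintype.card_fin]
  have hmeas1 : ∀ S T, μ (A₁ S T) = q ^ (S.card * (m - T.card)) := by
    intro S T
    have hset : A₁ S T = {ω : Fin m × Fin m → Bool | ∀ x ∈ Tᶜ ×ˢ S, ω x = false} := by
      ext ω
      simp only [hA₁, Set.mem_setOf_eq, Finset.mem_product, Finset.mem_compl]
      constructor
      · rintro h x ⟨hx1, hx2⟩; exact h x.2 hx2 x.1 hx1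
      · intro h i hi j hj; exact h (j,i) ⟨hj, hi⟩
    rw [hset, hμ, cyl_measure m p hp0 _ _, Finset.card_product, Finset.card_compl,
      Fintype.card_fin, Nat.mul_comm]
  -- covering of the complement
  have hcover : Eᶜ ⊆ ⋃ k ∈ Finset.Icc 1 K, ⋃ S ∈ Finset.powersetCard k (Finset.univ : Finset (Fin m)),
      ⋃ T ∈ Finset.powersetCard (k-1) (Finset.univ : Finset (Fin m)), (A₀ S T ∪ A₁ S T) := by
    intro ω hω
    obtain ⟨k, hk, S, T, hScard, hTcard, hor⟩ := hall_cover m ω hω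
    refine Set.mem_iUnion₂.mpr ⟨k, hk, Set.mem_iUnion₂.mpr ⟨S, Finset.mem_powersetCard_univ.mpr hScard,
      Set.mem_iUnion₂.mpr ⟨T, Finset.mem_powersetCard_univ.mpr hTcard, ?_⟩⟩⟩
    rcases hor with h | h
    · exact Or.inl h
    · exact Or.inr h
  -- union bound
  have hub : μ Eᶜ ≤ ∑ k ∈ Finset.Icc 1 K, ∑ S ∈ Finset.powersetCard k (Finset.univ : Finset (Fin m)),
      ∑ T ∈ Finset.powersetCard (k-1) (Finset.univ : Finset (Fin m)), (μ (A₀ S T) + μ (A₁ S T)) := by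
    calc μ Eᶜ ≤ μ (⋃ k ∈ Finset.Icc 1 K, ⋃ S ∈ Finset.powersetCard k (Finset.univ : Finset (Fin m)),
        ⋃ T ∈ Finset.powersetCard (k-1) (Finset.univ : Finset (Fin m)), (A₀ S T ∪ A₁ S T)) :=
          measure_mono hcover
      _ ≤ ∑ k ∈ Finset.Icc 1 K, μ (⋃ S ∈ Finset.powersetCard k (Finset.univ : Finset (Fin m)),
        ⋃ T ∈ Finset.powersetCard (k-1) (Finset.univ : Finset (Fin m)), (A₀ S T ∪ A₁ S T)) :=
          measure_biUnion_finset_le _ _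
      _ ≤ ∑ k ∈ Finset.Icc 1 K, ∑ S ∈ Finset.powersetCard k (Finset.univ : Finset (Fin m)),
          μ (⋃ T ∈ Finset.powersetCard (k-1) (Finset.univ : Finset (Fin m)), (A₀ S T ∪ A₁ S T)) :=
          Finset.sum_le_sum (fun k _ => measure_biUnion_finset_le _ _)
      _ ≤ ∑ k ∈ Finset.Icc 1 K, ∑ S ∈ Finset.powersetCard k (Finset.univ : Finset (Fin m)),
          ∑ T ∈ Finset.powersetCard (k-1) (Finset.univ : Finset (Fin m)), μ (A₀ S T ∪ A₁ S T) :=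
          Finset.sum_le_sum (fun k _ => Finset.sum_le_sum (fun S _ => measure_biUnion_finset_le _ _))
      _ ≤ _ := Finset.sum_le_sum (fun k _ => Finset.sum_le_sum (fun S _ =>
          Finset.sum_le_sum (fun T _ => measure_union_le _ _)))
  -- evaluate and bound each term
  have hterm : ∀ k ∈ Finset.Icc 1 K,
      (∑ S ∈ Finset.powersetCard k (Finset.univ : Finset (Fin m)),
      ∑ T ∈ Finset.powersetCard (k-1) (Finset.univ : Finset (Fin m)), (μ (A₀ S T) + μ (A₁ S T)))
      ≤ 2 * R := by
    intro k hk
    rw [Finset.mem_Icc] at hk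
    have hk1 : 1 ≤ k := hk.1
    have hk2 : 2*k ≤ m+1 := by omega
    have hkm : k ≤ m := by omega
    have hsum : ∀ S ∈ Finset.powersetCard k (Finset.univ : Finset (Fin m)),
        ∀ T ∈ Finset.powersetCard (k-1) (Finset.univ : Finset (Fin m)),
        μ (A₀ S T) + μ (A₁ S T) = 2 * q ^ (k * (m - k + 1)) := by
      intro S hS T hT
      have hScard := Finset.mem_powersetCard_univ.mp hS
      have hTcard := Finset.mem_powersetCard_univ.mp hT
      rw [hmeas0, hmeas1, hScard, hTcard, show m - (k-1) = m - k + 1 by omega, two_mul]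
    calc (∑ S ∈ Finset.powersetCard k (Finset.univ : Finset (Fin m)),
        ∑ T ∈ Finset.powersetCard (k-1) (Finset.univ : Finset (Fin m)), (μ (A₀ S T) + μ (A₁ S T)))
        = ∑ S ∈ Finset.powersetCard k (Finset.univ : Finset (Fin m)),
          ∑ T ∈ Finset.powersetCard (k-1) (Finset.univ : Finset (Fin m)),
          2 * q ^ (k * (m - k + 1)) := by
          apply Finset.sum_congr rfl; intro S hS
          apply Finset.sum_congr rfl; intro T hT
          exact hsum S hS T hT
      _ = (m.choose k : ℝ≥0∞) * ((m.choose (k-1) : ℝ≥0∞) * (2 * q ^ (k * (m - k + 1)))) := by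
          rw [Finset.sum_const, Finset.sum_const, Finset.card_powersetCard, Finset.card_powersetCard,
            Finset.card_univ, Fintype.card_fin, nsmul_eq_mul, nsmul_eq_mul]
      _ ≤ 2 * R := by
          -- real-number bound
          have hcast : ((k * (m - k + 1) : ℕ) : ℝ) = (k:ℝ) * ((m:ℝ) - (k:ℝ) + 1) := by
            push_cast [Nat.cast_sub hkm]; ring
          have hexp1 : 1 - p ≤ Real.exp (-p) := by
            nlinarith [Real.add_one_le_exp (-p)]
          have hpow : (1-p) ^ (k * (m - k + 1)) ≤
              Real.exp (-(ζ * L / m * ((k:ℝ) * ((m:ℝ) - (k:ℝ) + 1)))) := by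
            calc (1-p) ^ (k * (m - k + 1)) ≤ (Real.exp (-p)) ^ (k * (m - k + 1)) :=
                  pow_le_pow_left₀ h1p hexp1 _
              _ = Real.exp (((k * (m - k + 1) : ℕ) : ℝ) * (-p)) := by
                  rw [← Real.exp_nat_mul]
              _ = Real.exp (-(ζ * L / m * ((k:ℝ) * ((m:ℝ) - (k:ℝ) + 1)))) := by
                  rw [hcast, hp]; ring_nf
          have hreal : (m.choose k : ℝ) * (m.choose (k-1) : ℝ) * (1-p) ^ (k * (m - k + 1)) ≤
              Real.exp (1 + (-1 - 2*(ζ-1)/3) * L) := by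
            calc (m.choose k : ℝ) * (m.choose (k-1) : ℝ) * (1-p) ^ (k * (m - k + 1))
                ≤ (m.choose k : ℝ) * (m.choose (k-1) : ℝ) *
                  Real.exp (-(ζ * L / m * ((k:ℝ) * ((m:ℝ) - (k:ℝ) + 1)))) := by
                  apply mul_le_mul_of_nonneg_left hpow (by positivity)
              _ ≤ _ := core_scalar m k ζ hm hζ4 hk1 hk2
          calc (m.choose k : ℝ≥0∞) * ((m.choose (k-1) : ℝ≥0∞) * (2 * q ^ (k * (m - k + 1))))
              = 2 * ENNReal.ofReal ((m.choose k : ℝ) * ((m.choose (k-1) : ℝ) *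
                (1-p) ^ (k * (m - k + 1)))) := by
                rw [ENNReal.ofReal_mul (by positivity), ENNReal.ofReal_mul (by positivity),
                  ENNReal.ofReal_natCast, ENNReal.ofReal_natCast, hq,
                  ← ENNReal.ofReal_pow h1p]
                ring
            _ ≤ 2 * R := by
                apply mul_le_mul_right
                rw [hR]
                apply ENNReal.ofReal_le_ofReal
                calc (m.choose k : ℝ) * ((m.choose (k-1) : ℝ) * (1-p) ^ (k * (m - k + 1)))
                    = (m.choose k : ℝ) * (m.choose (k-1) : ℝ) * (1-p) ^ (k * (m - k + 1)) := by ring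
                  _ ≤ _ := hreal
  -- sum the bound
  have htotal : μ Eᶜ ≤ ENNReal.ofReal δb := by
    calc μ Eᶜ ≤ ∑ k ∈ Finset.Icc 1 K, ∑ S ∈ Finset.powersetCard k (Finset.univ : Finset (Fin m)),
        ∑ T ∈ Finset.powersetCard (k-1) (Finset.univ : Finset (Fin m)), (μ (A₀ S T) + μ (A₁ S T)) := hub
      _ ≤ ∑ _k ∈ Finset.Icc 1 K, 2 * R := Finset.sum_le_sum hterm
      _ = (K : ℝ≥0∞) * (2 * R) := by
          rw [Finset.sum_const, Nat.card_Icc, nsmul_eq_mul]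
          norm_num
      _ ≤ (m : ℝ≥0∞) * (2 * R) := by
          apply mul_le_mul_left
          exact_mod_cast Nat.cast_le.mpr (by omega : K ≤ m)
      _ ≤ ENNReal.ofReal δb := by
          rw [hR, ← ENNReal.ofReal_natCast m,
            show (2:ℝ≥0∞) = ENNReal.ofReal (2:ℝ) by simp,
            ← ENNReal.ofReal_mul (by norm_num : (0:ℝ) ≤ 2),
            ← ENNReal.ofReal_mul (by positivity : (0:ℝ) ≤ (m:ℝ))]
          apply ENNReal.ofReal_le_ofReal
          -- final real inequality
          have hApos : 0 < 2 * Real.exp 1 / δb := by positivity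
          have hAle : A ≤ (ζ - 1) * (2*L) / 3 := by
            have h3 : 3 * A / (2*L) ≤ ζ - 1 := by linarith
            rw [div_le_iff₀ (by linarith : (0:ℝ) < 2*L)] at h3
            linarith
          have hm_exp : (m:ℝ) = Real.exp L := by rw [hL, Real.exp_log hm0]
          calc (m:ℝ) * (2 * Real.exp (1 + (-1 - 2*(ζ-1)/3) * L))
              = 2 * Real.exp (1 + (- 2*(ζ-1)/3) * L) := by
                rw [hm_exp, show Real.exp L * (2 * Real.exp (1 + (-1 - 2*(ζ-1)/3) * L))
                  = 2 * (Real.exp L * Real.exp (1 + (-1 - 2*(ζ-1)/3) * L)) from by ring,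
                  ← Real.exp_add]
                congr 1
                ring
            _ ≤ 2 * Real.exp (1 - A) := by
                apply mul_le_mul_of_nonneg_left _ (by norm_num)
                apply Real.exp_le_exp.mpr
                nlinarith
            _ = δb := by
                rw [Real.exp_sub, hA, Real.exp_log hApos]
                field_simp
  -- conclude
  have hcompl : μ E = 1 - μ Eᶜ := by
    rw [measure_compl hEmeas (measure_ne_top μ E), measure_univ,
      ENNReal.sub_sub_cancel ENNReal.one_ne_top prob_le_one]
  calc ENNReal.ofReal (1-δb) ≤ 1 - ENNReal.ofReal δb := by
        apply ENNReal.le_sub_of_add_le_right ENNReal.ofReal_ne_top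
        rw [← ENNReal.ofReal_add (by linarith) hδb.le]
        simp
    _ ≤ 1 - μ Eᶜ := tsub_le_tsub_left htotal 1
    _ = μ E := hcompl.symm
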